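/- The Cremmer–Gervais intertwining identity: with A(e_i) = ∑_a e_a ⊗ K_{ν_a}^{−2i} and R(e_i⊗e_j) = e_i⊗e_j⊗α((K_{α_{ji}}q^{−δ_{ij}})²) + e_j⊗e_i⊗β((K_{α_{ji}}q^{−δ_{ij}})²), where α(x) = (q−q^{-1})/(1−x) and β(x) = (q^{-1}−qx)/(1−x), one has R A₁ A₂ = A₁ A₂ ρ, where ρ is the Cremmer–Gervais operator ρ(e_i⊗e_j) = q·q^{2(i−j)/n} e_j⊗e_i + ∑_k q̂ q^{2(i−k)/n} η(i,j,k) e_k⊗e_{i+j−k}. In matrix form: ∑_{c,d} R^{ms}_{cd} (A^c_i)^{ν_d} A^d_j = ∑_{k} ρ(i,j,k) (A^m_k)^{ν_s} A^s_{i+j−k} for all i,j,m,s. -/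

import Mathlib

noncomputable section

/-- η(i,j,k) = 1 if i ≤ k < j, −1 if j ≤ k < i, 0 otherwise. -/
def etaN (i j k : ℕ) : ℤ :=
  if i ≤ k ∧ k < j then 1 else if j ≤ k ∧ k < i then -1 else 0

/-- A^m_a = K_m^{−2a}. -/
def Amap {B : Type*} [Field B] {n : ℕ} (K : Fin n → B) (m : Fin n) (a : ℕ) : B :=
  (K m) ^ (-(2 * (a : ℤ)))

/-- (A^m_a)^{ν_s} = q^{−2aδ_{ms} + 2a/n} K_m^{−2a}, where q^{1/n} = t. -/
def AmapTw {B : Type*} [Field B] {n : ℕ} (K : Fin n → B) (q t : B) (m : Fin n) (a : ℕ)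
    (s : Fin n) : B :=
  q ^ (-(2 * (a : ℤ)) * (if m = s then 1 else 0)) * t ^ (2 * (a : ℤ)) *
    (K m) ^ (-(2 * (a : ℤ)))

/-- The argument (K_d K_c⁻¹ q^{−δ_{cd}})² appearing in the standard dynamical R-matrix. -/
def arg {B : Type*} [Field B] {n : ℕ} (K : Fin n → B) (q : B) (c d : Fin n) : B :=
  (K d * (K c)⁻¹ * q ^ (-(if c = d then (1 : ℤ) else 0))) ^ 2

private lemma sum_delta {B : Type*} [NonAssocSemiring B] {n : ℕ} (m s : Fin n)
    (f : Fin n → Fin n → B) :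
    (∑ c : Fin n, ∑ d : Fin n, (if m = c ∧ s = d then (1:B) else 0) * f c d) = f m s := by
  rw [Fintype.sum_eq_single m (fun c hc => Finset.sum_eq_zero fun d _ => by simp [Ne.symm hc]),
    Fintype.sum_eq_single s (fun d hd => by simp [Ne.symm hd])]
  simp

private lemma sum_delta' {B : Type*} [NonAssocSemiring B] {n : ℕ} (m s : Fin n)
    (f : Fin n → Fin n → B) :
    (∑ c : Fin n, ∑ d : Fin n, (if m = d ∧ s = c then (1:B) else 0) * f c d) = f s m := by
  rw [Fintype.sum_eq_single s (fun c hc => Finset.sum_eq_zero fun d _ => by simp [Ne.symm hc]),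
    Fintype.sum_eq_single m (fun d hd => by simp [Ne.symm hd])]
  simp

private lemma tel0 {B : Type*} [CommRing B] (u v : B) {i j : ℕ} (h : i ≤ j) :
    (∑ k ∈ Finset.Ico i j, u ^ k * v ^ (i + j - k)) * (v - u)
      = (u ^ i * v ^ j - u ^ j * v ^ i) * v := by
  have h1 : (∑ k ∈ Finset.Ico i j, u ^ k * v ^ (i + j - k))
      = u ^ i * v ^ (i + 1) * ∑ l ∈ Finset.range (j - i), u ^ l * v ^ (j - i - 1 - l) := by
    rw [Finset.sum_Ico_eq_sum_range, Finset.mul_sum]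
    refine Finset.sum_congr rfl fun l hl => ?_
    have hl' : l < j - i := Finset.mem_range.mp hl
    rw [show i + j - (i + l) = (i + 1) + (j - i - 1 - l) by omega, pow_add, pow_add]
    ring
  have h2 : (∑ l ∈ Finset.range (j - i), u ^ l * v ^ (j - i - 1 - l)) * (v - u)
      = v ^ (j - i) - u ^ (j - i) := by
    linear_combination - geom_sum₂_mul u v (j - i)
  calc (∑ k ∈ Finset.Ico i j, u ^ k * v ^ (i + j - k)) * (v - u)
      = u ^ i * v ^ (i + 1) *
          ((∑ l ∈ Finset.range (j - i), u ^ l * v ^ (j - i - 1 - l)) * (v - u)) := by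
        rw [h1]; ring
    _ = u ^ i * v ^ (i + 1) * (v ^ (j - i) - u ^ (j - i)) := by rw [h2]
    _ = u ^ i * (v ^ (i + 1) * v ^ (j - i)) - (u ^ i * u ^ (j - i)) * v ^ (i + 1) := by ring
    _ = u ^ i * v ^ (i + 1 + (j - i)) - u ^ (i + (j - i)) * v ^ (i + 1) := by
        rw [← pow_add v (i+1) (j-i), ← pow_add u i (j-i)]
    _ = (u ^ i * v ^ j - u ^ j * v ^ i) * v := by
        rw [show i + 1 + (j - i) = j + 1 by omega, show i + (j - i) = j by omega,
          pow_succ, pow_succ]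
        ring

private lemma tel {B : Type*} [CommRing B] (u v : B) (i j : ℕ) :
    (∑ k ∈ Finset.Icc (min i j) (max i j), ((etaN i j k : ℤ) : B) * (u ^ k * v ^ (i + j - k)))
        * (v - u)
      = (u ^ i * v ^ j - u ^ j * v ^ i) * v := by
  rcases le_total i j with h | h
  · rw [min_eq_left h, max_eq_right h, ← Finset.Ico_insert_right h,
      Finset.sum_insert Finset.right_notMem_Ico]
    rw [show etaN i j j = 0 by unfold etaN; rw [if_neg (by omega), if_neg (by omega)]]
    rw [Int.cast_zero, zero_mul, zero_add]
    have hc1 : (∑ k ∈ Finset.Ico i j, ((etaN i j k : ℤ) : B) * (u ^ k * v ^ (i + j - k)))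
        = ∑ k ∈ Finset.Ico i j, u ^ k * v ^ (i + j - k) := by
      refine Finset.sum_congr rfl fun k hk => ?_
      rw [Finset.mem_Ico] at hk
      rw [show etaN i j k = 1 by unfold etaN; rw [if_pos ⟨hk.1, hk.2⟩], Int.cast_one, one_mul]
    rw [hc1]
    exact tel0 u v h
  · rw [min_eq_right h, max_eq_left h, ← Finset.Ico_insert_right h,
      Finset.sum_insert Finset.right_notMem_Ico]
    rw [show etaN i j i = 0 by unfold etaN; rw [if_neg (by omega), if_neg (by omega)]]
    rw [Int.cast_zero, zero_mul, zero_add]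
    have hc2 : (∑ k ∈ Finset.Ico j i, ((etaN i j k : ℤ) : B) * (u ^ k * v ^ (i + j - k)))
        = ∑ k ∈ Finset.Ico j i, -(u ^ k * v ^ (j + i - k)) := by
      refine Finset.sum_congr rfl fun k hk => ?_
      rw [Finset.mem_Ico] at hk
      rw [show etaN i j k = -1 by unfold etaN; rw [if_neg (by omega), if_pos ⟨hk.1, hk.2⟩],
        show i + j = j + i by ring]
      push_cast; ring
    rw [hc2, Finset.sum_neg_distrib]
    linear_combination -(tel0 u v h)

private lemma final_alg {B : Type*} [Field B] (q x v S : B) (i j : ℕ)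
    (hx1 : (1:B) - x ≠ 0) (hv : v ≠ 0)
    (htel : S * (v - x * v) = ((x*v) ^ i * v ^ j - (x*v) ^ j * v ^ i) * v) :
    (q - q⁻¹)/(1-x) * ((x*v) ^ i * v ^ j) + (q⁻¹ - q*x)/(1-x) * (v ^ i * (x*v) ^ j)
      = q * ((x*v) ^ j * v ^ i) + (q - q⁻¹) * S := by
  have ha : (q - q⁻¹)/(1-x) * (1-x) = q - q⁻¹ := div_mul_cancel₀ _ hx1
  have hb : (q⁻¹ - q*x)/(1-x) * (1-x) = q⁻¹ - q*x := div_mul_cancel₀ _ hx1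
  refine mul_right_cancel₀ (mul_ne_zero hx1 hv) ?_
  linear_combination ((x*v)^i * v^j * v) * ha + (v^i * (x*v)^j * v) * hb + (q⁻¹ - q) * htel

private lemma final_alg' {B : Type*} [Field B] (q x v S : B) (i j : ℕ)
    (hx1 : (1:B) - x ≠ 0) (hv : v ≠ 0) (hqx : q * x = q⁻¹)
    (htel : S * (v - x * v) = ((x*v) ^ i * v ^ j - (x*v) ^ j * v ^ i) * v) :
    (q - q⁻¹)/(1-x) * ((x*v) ^ i * v ^ j) + (q⁻¹ - q*x)/(1-x) * ((x*v) ^ i * v ^ j)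
      = q * ((x*v) ^ j * v ^ i) + (q - q⁻¹) * S := by
  have ha : (q - q⁻¹)/(1-x) * (1-x) = q - q⁻¹ := div_mul_cancel₀ _ hx1
  have hb : (q⁻¹ - q*x)/(1-x) * (1-x) = q⁻¹ - q*x := div_mul_cancel₀ _ hx1
  refine mul_right_cancel₀ (mul_ne_zero hx1 hv) ?_
  linear_combination ((x*v)^i * v^j * v) * ha + ((x*v)^i * v^j * v) * hb + (q⁻¹ - q) * htel
    - ((x*v)^i * v^(j+1) - (x*v)^j * v^(i+1)) * hqx

/-- The Cremmer–Gervais intertwining identity R A₁ A₂ = A₁ A₂ ρ in matrix form: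
∑_{c,d} R^{ms}_{cd} (A^c_i)^{ν_d} A^d_j = ∑_k ρ(i,j,k) (A^m_k)^{ν_s} A^s_{i+j−k},
where R is the standard solution of the σ-DYBE with α(x) = (q−q⁻¹)/(1−x),
β(x) = (q⁻¹−qx)/(1−x), A(e_i) = ∑_a e_a ⊗ K_{ν_a}^{−2i}, and ρ is the Cremmer–Gervais
operator ρ(i,j,k) = q q^{2(i−j)/n}[k=j] + (q−q⁻¹) q^{2(i−k)/n} η(i,j,k) (with
q^{2/n} = t², t an n-th root of q). -/
theorem cremmer_gervais_intertwining (B : Type*) [Field B] (n : ℕ) (hn : 0 < n)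
    (q t : B) (hq : q ≠ 0) (hq2 : q ^ 2 ≠ 1) (ht : t ^ n = q)
    (K : Fin n → B) (hK : ∀ m, K m ≠ 0)
    (hgeneric : ∀ c d : Fin n, arg K q c d ≠ 1) :
    ∀ i j : ℕ, 1 ≤ i → i ≤ n → 1 ≤ j → j ≤ n → ∀ m s : Fin n,
      (∑ c : Fin n, ∑ d : Fin n,
          ((if m = c ∧ s = d then 1 else 0) * ((q - q⁻¹) / (1 - arg K q c d))
              + (if m = d ∧ s = c then 1 else 0) *
                  ((q⁻¹ - q * arg K q d c) / (1 - arg K q d c)))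
            * AmapTw K q t c i d * Amap K d j) =
        ∑ k ∈ Finset.Icc (min i j) (max i j),
          (q * t ^ (2 * ((i : ℤ) - (j : ℤ))) * (if k = j then 1 else 0)
              + (q - q⁻¹) * t ^ (2 * ((i : ℤ) - (k : ℤ))) * ((etaN i j k : ℤ) : B))
            * AmapTw K q t m k s * Amap K s (i + j - k) := by
  intro i j hi1 hin hj1 hjn m s
  have ht0 : t ≠ 0 := fun h => hq (by rw [← ht, h, zero_pow hn.ne'])
  have hTw : ∀ (c d : Fin n) (a : ℕ), AmapTw K q t c a d
      = t ^ (2 * (a : ℤ)) *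
          ((q ^ (-(2:ℤ) * (if c = d then 1 else 0)) * (K c) ^ (-(2:ℤ))) ^ a) := by
    intro c d a
    unfold AmapTw
    rw [mul_pow, ← zpow_natCast (q ^ (-(2:ℤ) * (if c = d then 1 else 0))),
      ← zpow_natCast ((K c) ^ (-(2:ℤ))), ← zpow_mul, ← zpow_mul]
    rw [show -(2:ℤ) * (if c = d then (1:ℤ) else 0) * (a:ℤ)
        = -(2 * (a:ℤ)) * (if c = d then 1 else 0) by ring,
      show -(2:ℤ) * (a:ℤ) = -(2 * (a:ℤ)) by ring]
    ring
  have hAm : ∀ (c : Fin n) (a : ℕ), Amap K c a = ((K c) ^ (-(2:ℤ))) ^ a := by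
    intro c a
    unfold Amap
    rw [← zpow_natCast ((K c) ^ (-(2:ℤ))), ← zpow_mul]
    norm_num
  have hUxv : q ^ (-(2:ℤ) * (if m = s then 1 else 0)) * (K m) ^ (-(2:ℤ))
      = arg K q m s * (K s) ^ (-(2:ℤ)) := by
    rcases eq_or_ne m s with rfl | hms
    · rw [if_pos rfl, mul_one]
      rw [show arg K q m m = q ^ (-(2:ℤ)) by
        unfold arg
        rw [if_pos rfl, mul_inv_cancel₀ (hK m), one_mul, ← zpow_natCast (q ^ (-(1:ℤ))),
          ← zpow_mul]
        norm_num]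
    · rw [if_neg hms, mul_zero, zpow_zero, one_mul]
      unfold arg
      rw [if_neg hms, neg_zero, zpow_zero, mul_one]
      simp only [show (-(2:ℤ)) = -((2:ℕ):ℤ) by norm_num, zpow_neg, zpow_natCast]
      field_simp
      rw [div_eq_div_iff (pow_ne_zero 2 (hK m))
        (mul_ne_zero (pow_ne_zero 2 (hK m)) (hK s))]
      ring
  have hjmem : j ∈ Finset.Icc (min i j) (max i j) :=
    Finset.mem_Icc.mpr ⟨min_le_right i j, le_max_right i j⟩
  have htt : ∀ a : ℕ, t ^ (2 * ((i:ℤ) - (a:ℤ))) * t ^ (2 * (a:ℤ)) = t ^ (2 * (i:ℤ)) := by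
    intro a
    rw [← zpow_add₀ ht0]
    congr 1
    ring
  have hkey : ∀ k ∈ Finset.Icc (min i j) (max i j),
      (q * t ^ (2 * ((i : ℤ) - (j : ℤ))) * (if k = j then 1 else 0)
          + (q - q⁻¹) * t ^ (2 * ((i : ℤ) - (k : ℤ))) * ((etaN i j k : ℤ) : B))
        * AmapTw K q t m k s * Amap K s (i + j - k)
      = t ^ (2 * (i:ℤ)) *
          ((if k = j then 1 else 0) *
            (q * ((arg K q m s * (K s) ^ (-(2:ℤ))) ^ j * ((K s) ^ (-(2:ℤ))) ^ i))
          + (q - q⁻¹) * (((etaN i j k : ℤ) : B) *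
              ((arg K q m s * (K s) ^ (-(2:ℤ))) ^ k * ((K s) ^ (-(2:ℤ))) ^ (i + j - k)))) := by
    intro k hk
    rw [hTw m s k, hAm s (i + j - k), hUxv]
    rcases eq_or_ne k j with rfl | hkj
    · rw [if_pos rfl, Nat.add_sub_cancel]
      linear_combination ((q + (q - q⁻¹) * ((etaN i k k : ℤ) : B))
        * ((arg K q m s * (K s) ^ (-(2:ℤ))) ^ k * ((K s) ^ (-(2:ℤ))) ^ i)) * htt k
    · rw [if_neg hkj]
      linear_combination ((q - q⁻¹) * ((etaN i j k : ℤ) : B)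
        * ((arg K q m s * (K s) ^ (-(2:ℤ))) ^ k * ((K s) ^ (-(2:ℤ))) ^ (i + j - k))) * htt k
  have hL1 : (∑ c : Fin n, ∑ d : Fin n, (if m = c ∧ s = d then (1:B) else 0) *
        ((q - q⁻¹) / (1 - arg K q c d) * (AmapTw K q t c i d * Amap K d j)))
      = (q - q⁻¹) / (1 - arg K q m s) * (AmapTw K q t m i s * Amap K s j) :=
    sum_delta m s _
  have hL2 : (∑ c : Fin n, ∑ d : Fin n, (if m = d ∧ s = c then (1:B) else 0) *
        ((q⁻¹ - q * arg K q d c) / (1 - arg K q d c) * (AmapTw K q t c i d * Amap K d j)))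
      = (q⁻¹ - q * arg K q m s) / (1 - arg K q m s) * (AmapTw K q t s i m * Amap K m j) :=
    sum_delta' m s _
  conv_lhs => simp only [add_mul, mul_assoc, Finset.sum_add_distrib]
  rw [hL1, hL2]
  rw [Finset.sum_congr rfl hkey, ← Finset.mul_sum, Finset.sum_add_distrib]
  simp only [ite_mul, one_mul, zero_mul]
  rw [Finset.sum_ite_eq' (Finset.Icc (min i j) (max i j)) j, if_pos hjmem, ← Finset.mul_sum]
  have hx1 : (1:B) - arg K q m s ≠ 0 := sub_ne_zero_of_ne (Ne.symm (hgeneric m s))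
  have hv0 : (K s) ^ (-(2:ℤ)) ≠ 0 := zpow_ne_zero _ (hK s)
  have htel := tel (arg K q m s * (K s) ^ (-(2:ℤ))) ((K s) ^ (-(2:ℤ))) i j
  rcases eq_or_ne m s with rfl | hms
  · rw [hTw m m i, hAm m j, hUxv]
    have hqx : q * arg K q m m = q⁻¹ := by
      rw [show arg K q m m = q ^ (-(2:ℤ)) by
        unfold arg
        rw [if_pos rfl, mul_inv_cancel₀ (hK m), one_mul, ← zpow_natCast (q ^ (-(1:ℤ))),
          ← zpow_mul]
        norm_num]
      rw [show (-(2:ℤ)) = (-1) + (-1) by ring, zpow_add₀ hq, zpow_neg_one, ← mul_assoc,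
        mul_inv_cancel₀ hq, one_mul]
    linear_combination (t ^ (2 * (i:ℤ))) *
      final_alg' q (arg K q m m) ((K m) ^ (-(2:ℤ)))
        (∑ k ∈ Finset.Icc (min i j) (max i j), ((etaN i j k : ℤ) : B) *
          ((arg K q m m * (K m) ^ (-(2:ℤ))) ^ k * ((K m) ^ (-(2:ℤ))) ^ (i + j - k)))
        i j hx1 hv0 hqx htel
  · rw [hTw m s i, hTw s m i, hAm s j, hAm m j]
    simp only [if_neg hms, if_neg (Ne.symm hms), mul_zero, zpow_zero, one_mul]
    have hU' : (K m) ^ (-(2:ℤ)) = arg K q m s * (K s) ^ (-(2:ℤ)) := by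
      rw [← hUxv, if_neg hms, mul_zero, zpow_zero, one_mul]
    rw [hU']
    linear_combination (t ^ (2 * (i:ℤ))) *
      final_alg q (arg K q m s) ((K s) ^ (-(2:ℤ)))
        (∑ k ∈ Finset.Icc (min i j) (max i j), ((etaN i j k : ℤ) : B) *
          ((arg K q m s * (K s) ^ (-(2:ℤ))) ^ k * ((K s) ^ (-(2:ℤ))) ^ (i + j - k)))
        i j hx1 hv0 htel
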